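/- Let p be a prime and A ⊆ F_p finite with 0 ∉ A. For any x ∈ F_p with x ≠ 0, the size of A ∩ (B + x) (with B ⊆ F_p, 0 ∉ B, |A| = |B|) is at most (1/(|A||B|)) times the number of quadruples (u, u*, a, b) ∈ (AB)² × A × B satisfying u·b⁻¹ − u*·a⁻¹ = x, where AB = {ab : a ∈ A, b ∈ B}. -/

import Mathlib

open Finset Pointwise

theorem stmt_15 (p : ℕ) [Fact p.Prime] (A B : Finset (ZMod p))
    (hA : (0 : ZMod p) ∉ A) (hB : (0 : ZMod p) ∉ B) (hcard : A.card = B.card)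
    (x : ZMod p) (hx : x ≠ 0) :
    ((A ∩ B.image (· + x)).card : ℝ) ≤
      (1 / ((A.card : ℝ) * B.card)) *
        (((A * B) ×ˢ (A * B) ×ˢ A ×ˢ B).filter
          (fun q => q.1 * q.2.2.2⁻¹ - q.2.1 * q.2.2.1⁻¹ = x)).card := by
  set S := A ∩ B.image (· + x) with hSdef
  by_cases hS : S = ∅
  · rw [hS]
    simp only [Finset.card_empty, Nat.cast_zero]
    positivity
  obtain ⟨y0, hy0⟩ := Finset.nonempty_iff_ne_empty.2 hS
  have hAne : A.Nonempty := ⟨y0, (Finset.mem_inter.1 hy0).1⟩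
  have hBne : B.Nonempty := by
    obtain ⟨b, hb, -⟩ := Finset.mem_image.1 (Finset.mem_inter.1 hy0).2
    exact ⟨b, hb⟩
  have key : S.card * (A.card * B.card) ≤
      (((A * B) ×ˢ (A * B) ×ˢ A ×ˢ B).filter
        (fun q => q.1 * q.2.2.2⁻¹ - q.2.1 * q.2.2.1⁻¹ = x)).card := by
    have hcardprod : S.card * (A.card * B.card) = (S ×ˢ A ×ˢ B).card := by
      simp [Finset.card_product]
    rw [hcardprod]
    apply Finset.card_le_card_of_injOn
      (fun t => (t.1 * t.2.2, t.2.1 * (t.1 - x), t.2.1, t.2.2))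
    · rintro ⟨y, a, b⟩ ht
      simp only [Finset.mem_coe, Finset.mem_product] at ht
      obtain ⟨hy, ha, hb⟩ := ht
      have hyA : y ∈ A := (Finset.mem_inter.1 hy).1
      have hyB : y - x ∈ B := by
        obtain ⟨b', hb', hbeq⟩ := Finset.mem_image.1 (Finset.mem_inter.1 hy).2
        simpa [← hbeq] using hb'
      have hane : a ≠ 0 := fun h => hA (h ▸ ha)
      have hbne : b ≠ 0 := fun h => hB (h ▸ hb)
      simp only [Finset.mem_coe, Finset.mem_filter, Finset.mem_product]
      refine ⟨⟨Finset.mul_mem_mul hyA hb, Finset.mul_mem_mul ha hyB, ha, hb⟩, ?_⟩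
      · field_simp
        ring
    · rintro ⟨y1, a1, b1⟩ h1 ⟨y2, a2, b2⟩ h2 heq
      simp only [Finset.mem_coe, Finset.mem_product] at h1 h2
      simp only [Prod.mk.injEq] at heq
      obtain ⟨hu, -, haeq, hbeq⟩ := heq
      have hbne : b1 ≠ 0 := fun h => hB (h ▸ h1.2.2)
      subst haeq; subst hbeq
      have : y1 = y2 := mul_right_cancel₀ hbne hu
      simp [this]
  have hApos : (0:ℝ) < A.card := by exact_mod_cast Finset.card_pos.2 hAne
  have hBpos : (0:ℝ) < B.card := by exact_mod_cast Finset.card_pos.2 hBne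
  rw [one_div, inv_mul_eq_div, le_div_iff₀ (by positivity)]
  exact_mod_cast key
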